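/- Let d ≥ 1 and let H = {H_i}_{i=1}^{d²} be a MIC for d×d complex matrices with all weights h_i = tr H_i strictly positive, Gram matrix G, bias matrix A = diag(h_i), and Born matrix Φ = AG^{-1}. Set ρ_i := H_i/h_i. Then for every d×d complex matrix ρ and every d×d complex matrix D: tr(Dρ) = Σ_{j,k} tr(Dρ_j)·[Φ]_{jk}·tr(H_kρ). (This is the Born Rule written in the form Q(D) = P(D|H)·Φ·P(H).) -/

import Mathlib

open Matrix BigOperators
open scoped ComplexOrder Kronecker

/-- A measure basis: a linearly independent family of `d²` Hermitian `d×d` complex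
matrices summing to the identity, with nonnegative traces. -/
def IsMeasureBasis {d : ℕ} (L : Fin (d ^ 2) → Matrix (Fin d) (Fin d) ℂ) : Prop :=
  (∀ i, (L i).IsHermitian) ∧ LinearIndependent ℝ L ∧ (∑ i, L i) = 1 ∧ ∀ i, 0 ≤ ((L i).trace).re

/-- A Wigner basis: an orthogonal measure basis. -/
def IsWignerBasis {d : ℕ} (L : Fin (d ^ 2) → Matrix (Fin d) (Fin d) ℂ) : Prop :=
  IsMeasureBasis L ∧ ∀ i j, i ≠ j → (L i * L j).trace = 0

/-- The rescaled frame operator `S_L(X) = ∑ⱼ (tr(X Lⱼ)/lⱼ) Lⱼ`. -/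
noncomputable def rsFrameOp {n : Type*} [Fintype n] {m : Type*} [Fintype m] [DecidableEq m]
    (L : n → Matrix m m ℂ) (X : Matrix m m ℂ) : Matrix m m ℂ :=
  ∑ j, (((X * L j).trace) / ((L j).trace)) • L j

/-- A map on matrices that is ℝ-linear, Hermiticity-preserving, self-adjoint with respect to
the Hilbert–Schmidt inner product on Hermitian matrices, and positive. -/
def IsPosSelfAdjMap {m : Type*} [Fintype m]
    (T : Matrix m m ℂ → Matrix m m ℂ) : Prop :=
  IsLinearMap ℝ T ∧ (∀ X, X.IsHermitian → (T X).IsHermitian) ∧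
  (∀ X Y, X.IsHermitian → Y.IsHermitian → (T X * Y).trace = (X * T Y).trace) ∧
  (∀ X, X.IsHermitian → 0 ≤ ((X * T X).trace).re)

/-- `T` is the (unique) positive self-adjoint inverse square root of the rescaled frame
operator of `L`, i.e. `S_L ∘ T ∘ T = id` on Hermitian matrices; `PW(L) i = T (L i)`. -/
def IsInvSqrtOfFrameOp {n : Type*} [Fintype n] {m : Type*} [Fintype m] [DecidableEq m]
    (L : n → Matrix m m ℂ) (T : Matrix m m ℂ → Matrix m m ℂ) : Prop :=
  IsPosSelfAdjMap T ∧ ∀ X : Matrix m m ℂ, X.IsHermitian → rsFrameOp L (T (T X)) = X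

/-- the Born Rule in the form `Q(D) = P(D|H) Φ P(H)`: for a MIC `H` with
Born matrix `Φ = AG⁻¹` and `ρⱼ = Hⱼ/hⱼ`, every pair of matrices `D, ρ` satisfies
`tr(Dρ) = ∑ⱼₖ tr(Dρⱼ) Φⱼₖ tr(Hₖρ)`. -/
theorem born_rule_ltp_analog {d : ℕ} [NeZero d]
    (H : Fin (d ^ 2) → Matrix (Fin d) (Fin d) ℂ)
    (hH : IsMeasureBasis H) (hHpsd : ∀ i, (H i).PosSemidef)
    (hpos : ∀ i, 0 < ((H i).trace).re)
    (G A : Matrix (Fin (d ^ 2)) (Fin (d ^ 2)) ℝ)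
    (hG : ∀ i j, G i j = ((H i * H j).trace).re)
    (hA : A = Matrix.diagonal fun i => ((H i).trace).re) :
    ∀ ρ D : Matrix (Fin d) (Fin d) ℂ,
      (D * ρ).trace =
        ∑ j, ∑ k, (D * (((((H j).trace).re)⁻¹ : ℝ) • H j)).trace *
          (((A * G⁻¹) j k : ℝ) : ℂ) * (H k * ρ).trace := by
  obtain ⟨hherm, hli, hsum, htrnn⟩ := hH
  haveI : NeZero (d ^ 2) := ⟨pow_ne_zero 2 (NeZero.ne d)⟩
  -- traces of products of Hermitian matrices are real
  have htr_real : ∀ i j, (H i * H j).trace = (((H i * H j).trace.re : ℝ) : ℂ) := by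
    intro i j
    refine (Complex.conj_eq_iff_re.mp ?_).symm
    have h1 : ((H i * H j)ᴴ).trace = star ((H i * H j).trace) :=
      Matrix.trace_conjTranspose _
    rw [Matrix.conjTranspose_mul, hherm j, hherm i, Matrix.trace_mul_comm] at h1
    exact h1.symm
  have hli' := Fintype.linearIndependent_iff.mp hli
  -- G is positive definite
  have hGpd : G.PosDef := by
    refine Matrix.posDef_iff_dotProduct_mulVec.mpr ⟨?_, ?_⟩
    · ext i j
      simp only [Matrix.conjTranspose_apply, star_trivial]
      rw [hG, hG, Matrix.trace_mul_comm]
    · intro x hx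
      set M : Matrix (Fin d) (Fin d) ℂ := ∑ i, x i • H i with hM
      have hM0 : M ≠ 0 := by
        intro h0
        exact hx (funext fun i => hli' x h0 i)
      have hMherm : Mᴴ = M := by
        rw [hM, Matrix.conjTranspose_sum]
        refine Finset.sum_congr rfl fun i _ => ?_
        rw [Matrix.conjTranspose_smul, star_trivial, hherm i]
      have hquad : star x ⬝ᵥ G *ᵥ x = ((Mᴴ * M).trace).re := by
        rw [hMherm]
        have hMM : M * M = ∑ i, ∑ j, (x i * x j) • (H i * H j) := by
          rw [hM, Finset.sum_mul]
          refine Finset.sum_congr rfl fun i _ => ?_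
          rw [Finset.mul_sum]
          refine Finset.sum_congr rfl fun j _ => ?_
          rw [Matrix.smul_mul, Matrix.mul_smul, smul_smul]
        rw [hMM]
        simp only [Matrix.trace_sum, Matrix.trace_smul, Complex.re_sum, star_trivial]
        simp only [dotProduct, Matrix.mulVec, dotProduct]
        refine Finset.sum_congr rfl fun i _ => ?_
        rw [Finset.mul_sum]
        refine Finset.sum_congr rfl fun j _ => ?_
        rw [Complex.smul_re, hG]
        simp only [smul_eq_mul]
        ring
      rw [hquad, hMherm]
      have hentry : ((M * M).trace).re = ∑ j, ∑ i, Complex.normSq (M i j) := by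
        nth_rewrite 1 [← hMherm]
        simp only [Matrix.trace, Matrix.diag, Matrix.mul_apply,
          Matrix.conjTranspose_apply, Complex.re_sum]
        refine Finset.sum_congr rfl fun j _ => Finset.sum_congr rfl fun i _ => ?_
        rw [mul_comm, RCLike.star_def, Complex.mul_conj]
        simp
      rw [← hMherm, hMherm, hentry]
      obtain ⟨i, j, hij⟩ : ∃ i j, M i j ≠ 0 := by
        by_contra h
        push_neg at h
        exact hM0 (by ext i j; exact h i j)
      refine Finset.sum_pos'
        (fun j _ => Finset.sum_nonneg fun i _ => Complex.normSq_nonneg _)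
        ⟨j, Finset.mem_univ _, Finset.sum_pos'
          (fun i _ => Complex.normSq_nonneg _)
          ⟨i, Finset.mem_univ _, Complex.normSq_pos.mpr hij⟩⟩
  have hGinv : G⁻¹ * G = 1 :=
    Matrix.nonsing_inv_mul G (isUnit_iff_ne_zero.mpr hGpd.det_pos.ne')
  -- H is linearly independent over ℂ
  have hliC : LinearIndependent ℂ H := by
    refine Fintype.linearIndependent_iff.mpr fun c hc i => ?_
    have hc' : ∑ i, (starRingEnd ℂ) (c i) • H i = 0 := by
      have h0 := congrArg Matrix.conjTranspose hc
      rw [Matrix.conjTranspose_sum] at h0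
      simp only [Matrix.conjTranspose_smul, Matrix.conjTranspose_zero] at h0
      refine Eq.trans ?_ h0
      exact Finset.sum_congr rfl fun i _ => by rw [hherm i]; rfl
    have hre : ∀ i, (c i).re = 0 := by
      apply hli' fun i => (c i).re
      have h2 : ∑ i, (c i + (starRingEnd ℂ) (c i)) • H i = 0 := by
        simp only [add_smul, Finset.sum_add_distrib, hc, hc', add_zero]
      have h3 : ∑ i, (((2 : ℝ) * (c i).re : ℝ) : ℂ) • H i = 0 := by
        rw [← h2]
        exact Finset.sum_congr rfl fun i _ => by rw [Complex.add_conj]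
      have h4 : ∑ i, ((2 : ℝ) * (c i).re) • H i = 0 := by
        rw [← h3]
        exact Finset.sum_congr rfl fun i _ => by
          rw [← algebraMap_smul ℂ ((2 : ℝ) * (c i).re) (H i)]; rfl
      have h5 := congrArg (fun X => ((2 : ℝ)⁻¹) • X) h4
      simp only [Finset.smul_sum, smul_smul, smul_zero] at h5
      rw [← h5]
      exact (Finset.sum_congr rfl fun i _ => by congr 1; ring).symm
    have him : ∀ i, (c i).im = 0 := by
      apply hli' fun i => (c i).im
      have h2 : ∑ i, (c i - (starRingEnd ℂ) (c i)) • H i = 0 := by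
        simp only [sub_smul, Finset.sum_sub_distrib, hc, hc', sub_zero]
      have h3 : ∑ i, ((((2 : ℝ) * (c i).im : ℝ) : ℂ) * Complex.I) • H i = 0 := by
        rw [← h2]
        exact Finset.sum_congr rfl fun i _ => by rw [Complex.sub_conj]
      have h4 := congrArg (fun X => (((2 : ℝ) : ℂ) * Complex.I)⁻¹ • X) h3
      simp only [Finset.smul_sum, smul_smul, smul_zero] at h4
      have h5 : ∑ i, (((c i).im : ℝ) : ℂ) • H i = 0 := by
        rw [← h4]
        refine (Finset.sum_congr rfl fun i _ => ?_).symm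
        congr 1
        have h2I : (((2 : ℝ) : ℂ) * Complex.I) ≠ 0 := by
          simp [Complex.I_ne_zero]
        field_simp
        push_cast
        ring
      rw [show (0 : Matrix (Fin d) (Fin d) ℂ) = ∑ i, (((c i).im : ℝ) : ℂ) • H i from h5.symm]
      exact Finset.sum_congr rfl fun i _ => by
        rw [← algebraMap_smul ℂ ((c i).im) (H i)]; rfl
    exact Complex.ext (hre i) (him i)
  -- basis of the full matrix space
  have hcard : Fintype.card (Fin (d ^ 2)) = Module.finrank ℂ (Matrix (Fin d) (Fin d) ℂ) := by
    rw [Module.finrank_matrix]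
    simp [sq]
  let b := basisOfLinearIndependentOfCardEqFinrank hliC hcard
  have hb : ∀ i, b i = H i := fun i =>
    congrFun (coe_basisOfLinearIndependentOfCardEqFinrank hliC hcard) i
  intro ρ D
  -- both sides as ℂ-linear maps in ρ
  let L1 : Matrix (Fin d) (Fin d) ℂ →ₗ[ℂ] ℂ :=
    { toFun := fun X => (D * X).trace
      map_add' := fun X Y => by simp [Matrix.mul_add]
      map_smul' := fun c X => by simp [Matrix.mul_smul] }
  let L2 : Matrix (Fin d) (Fin d) ℂ →ₗ[ℂ] ℂ :=
    { toFun := fun X => ∑ j, ∑ k, (D * (((((H j).trace).re)⁻¹ : ℝ) • H j)).trace *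
          (((A * G⁻¹) j k : ℝ) : ℂ) * (H k * X).trace
      map_add' := fun X Y => by
        simp only [Matrix.mul_add, Matrix.trace_add, mul_add, Finset.sum_add_distrib]
      map_smul' := fun c X => by
        simp only [Matrix.mul_smul, Matrix.trace_smul, smul_eq_mul, RingHom.id_apply,
          Finset.mul_sum]
        exact Finset.sum_congr rfl fun _ _ => Finset.sum_congr rfl fun _ _ => by ring }
  have hL : L1 = L2 := by
    apply b.ext
    intro m
    rw [hb]
    show (D * H m).trace = ∑ j, ∑ k, (D * (((((H j).trace).re)⁻¹ : ℝ) • H j)).trace *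
          (((A * G⁻¹) j k : ℝ) : ℂ) * (H k * H m).trace
    have hterm : ∀ j, (D * (((((H j).trace).re)⁻¹ : ℝ) • H j)).trace
        = (((((H j).trace).re)⁻¹ : ℝ) : ℂ) * (D * H j).trace := by
      intro j
      rw [Matrix.mul_smul, Matrix.trace_smul, Complex.real_smul]
    have hAG : ∀ j k, (A * G⁻¹) j k = ((H j).trace).re * (G⁻¹ j k) := by
      intro j k
      rw [hA, Matrix.diagonal_mul]
    have step1 : (∑ j, ∑ k, (D * (((((H j).trace).re)⁻¹ : ℝ) • H j)).trace *
          (((A * G⁻¹) j k : ℝ) : ℂ) * (H k * H m).trace)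
        = ∑ j, (D * H j).trace * ((((G⁻¹ * G) j m : ℝ)) : ℂ) := by
      refine Finset.sum_congr rfl fun j _ => ?_
      rw [Matrix.mul_apply]
      push_cast
      rw [Finset.mul_sum]
      refine Finset.sum_congr rfl fun k _ => ?_
      rw [hterm, hAG, htr_real k m, ← hG k m]
      push_cast
      have hne : ((((H j).trace).re : ℝ) : ℂ) ≠ 0 := by
        exact_mod_cast (hpos j).ne'
      field_simp
    rw [step1, hGinv]
    simp [Matrix.one_apply, apply_ite, Finset.sum_ite_eq']
  exact LinearMap.congr_fun hL ρ
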